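/- arXiv:1905.09256 — 3 statements merged into one kernel-verified Lean document; each statement's English description precedes it below -/
import Mathlib

section
/- Let G be an X-generated group. The projection F(G) → G, (Γ,g) ↦ g, is a surjective monoid morphism which is idempotent pure (the preimage of 1 consists entirely of idempotents); its kernel congruence is exactly the minimum group congruence σ of F(G) (i.e., (Γ,g) σ (Ξ,h) iff g = h), so G is the maximum group quotient of F(G). Moreover, for each g ∈ G the element (Δ_g, g) is the maximum element of its σ-class; hence F(G) is an F-inverse monoid with max-operation m(Γ,g) = (Δ_g, g). -/
namespace FInvPaper

universe u v w

section Generic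
variable {S : Type u}

/-- The natural partial order on an inverse monoid: `a ≤ b` iff `a = b·e` for some idempotent. -/
def nle [Mul S] (a b : S) : Prop := ∃ e : S, e * e = e ∧ a = b * e

/-- The minimum group congruence σ: `a σ b` iff `a·e = b·e` for some idempotent `e`. -/
def sigma [Mul S] (a b : S) : Prop := ∃ e : S, e * e = e ∧ a * e = b * e

/-- `m` assigns to every element the maximum element of its σ-class. -/
def IsMaxOp [Mul S] (m : S → S) : Prop :=
  ∀ a : S, sigma (m a) a ∧ ∀ b : S, sigma b a → nle b (m a)

/-- A subset of `S` which is an entire σ-class. -/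
def IsSigmaClass [Mul S] (A : Set S) : Prop := ∃ a : S, A = {b : S | sigma b a}

end Generic

/-- Inverse monoids: monoids with an involution satisfying `a·a⁻¹·a = a`, `(a·b)⁻¹ = b⁻¹·a⁻¹`,
in which all idempotents commute. -/
class InverseMonoid (S : Type u) extends Monoid S, Inv S where
  inv_inv : ∀ a : S, a⁻¹⁻¹ = a
  mul_inv_rev : ∀ a b : S, (a * b)⁻¹ = b⁻¹ * a⁻¹
  mul_inv_self_mul : ∀ a : S, a * a⁻¹ * a = a
  idem_comm : ∀ e f : S, e * e = e → f * f = f → e * f = f * e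

/-- F-inverse monoids in the enriched signature `(·, ⁻¹, ᵐ, 1)`. -/
class FInverseMonoid (S : Type u) extends InverseMonoid S where
  mx : S → S
  mx_isMaxOp : IsMaxOp mx

/-- The max-operation of an F-inverse monoid. -/
def mx {S : Type u} [FInverseMonoid S] : S → S := FInverseMonoid.mx

section InverseMonoidLemmas

variable {S : Type u} [InverseMonoid S]

lemma mul_inv_idem (a : S) : (a * a⁻¹) * (a * a⁻¹) = a * a⁻¹ := by
  conv_lhs => rw [← mul_assoc, InverseMonoid.mul_inv_self_mul]

lemma inv_mul_self_mul (a : S) : a⁻¹ * a * a⁻¹ = a⁻¹ := by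
  have h := InverseMonoid.mul_inv_self_mul (a := a⁻¹)
  rwa [InverseMonoid.inv_inv] at h

lemma inv_mul_idem (a : S) : (a⁻¹ * a) * (a⁻¹ * a) = a⁻¹ * a := by
  conv_lhs => rw [← mul_assoc, inv_mul_self_mul]

lemma idem_inv {e : S} (he : e * e = e) : e⁻¹ = e := by
  have h1 : e⁻¹ * e⁻¹ = e⁻¹ := by rw [← InverseMonoid.mul_inv_rev, he]
  have hc : e * e⁻¹ = e⁻¹ * e := InverseMonoid.idem_comm e e⁻¹ he h1
  have h2 : e = e * e⁻¹ := by
    calc e = e * e⁻¹ * e := (InverseMonoid.mul_inv_self_mul e).symm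
    _ = e * (e⁻¹ * e) := mul_assoc _ _ _
    _ = e * (e * e⁻¹) := by rw [hc]
    _ = e * e * e⁻¹ := (mul_assoc _ _ _).symm
    _ = e * e⁻¹ := by rw [he]
  have h3 : e⁻¹ = e⁻¹ * e := by
    calc e⁻¹ = e⁻¹ * e * e⁻¹ := (inv_mul_self_mul e).symm
    _ = e⁻¹ * (e * e⁻¹) := mul_assoc _ _ _
    _ = e⁻¹ * (e⁻¹ * e) := by rw [hc]
    _ = e⁻¹ * e⁻¹ * e := (mul_assoc _ _ _).symm
    _ = e⁻¹ * e := by rw [h1]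
  rw [h3, ← hc, ← h2]

lemma idem_mul_idem {e f : S} (he : e * e = e) (hf : f * f = f) :
    (e * f) * (e * f) = e * f := by
  calc (e * f) * (e * f) = e * (f * (e * f)) := mul_assoc _ _ _
  _ = e * (f * e * f) := by rw [← mul_assoc f e f]
  _ = e * (e * f * f) := by rw [← InverseMonoid.idem_comm e f he hf]
  _ = e * (e * (f * f)) := by rw [mul_assoc e f f]
  _ = e * (e * f) := by rw [hf]
  _ = e * e * f := (mul_assoc _ _ _).symm
  _ = e * f := by rw [he]

lemma sigma_refl (a : S) : sigma a a := ⟨1, one_mul 1, rfl⟩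

lemma sigma_symm {a b : S} (h : sigma a b) : sigma b a := by
  obtain ⟨e, he, hab⟩ := h
  exact ⟨e, he, hab.symm⟩

lemma sigma_trans {a b c : S} (h₁ : sigma a b) (h₂ : sigma b c) : sigma a c := by
  obtain ⟨e, he, h1⟩ := h₁
  obtain ⟨f, hf, h2⟩ := h₂
  refine ⟨e * f, idem_mul_idem he hf, ?_⟩
  calc a * (e * f) = a * e * f := (mul_assoc _ _ _).symm
  _ = b * e * f := by rw [h1]
  _ = b * (e * f) := mul_assoc _ _ _
  _ = b * (f * e) := by rw [InverseMonoid.idem_comm e f he hf]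
  _ = b * f * e := (mul_assoc _ _ _).symm
  _ = c * f * e := by rw [h2]
  _ = c * (f * e) := mul_assoc _ _ _
  _ = c * (e * f) := by rw [InverseMonoid.idem_comm e f he hf]

lemma sigma_mul_left {a b : S} (c : S) (h : sigma a b) : sigma (c * a) (c * b) := by
  obtain ⟨e, he, hab⟩ := h
  exact ⟨e, he, by rw [mul_assoc, hab, ← mul_assoc]⟩

lemma inner_lemma {e : S} (he : e * e = e) (a : S) :
    a⁻¹ * (a * e * a⁻¹) = e * a⁻¹ := by
  calc a⁻¹ * (a * e * a⁻¹) = a⁻¹ * (a * e) * a⁻¹ := by rw [← mul_assoc a⁻¹ (a * e) a⁻¹]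
  _ = a⁻¹ * a * e * a⁻¹ := by rw [← mul_assoc a⁻¹ a e]
  _ = e * (a⁻¹ * a) * a⁻¹ := by rw [InverseMonoid.idem_comm (a⁻¹ * a) e (inv_mul_idem a) he]
  _ = e * (a⁻¹ * a * a⁻¹) := by rw [mul_assoc e (a⁻¹ * a) a⁻¹]
  _ = e * a⁻¹ := by rw [inv_mul_self_mul]

lemma sigma_inv {a b : S} (h : sigma a b) : sigma a⁻¹ b⁻¹ := by
  obtain ⟨e, he, hab⟩ := h
  have key5 : e * a⁻¹ = e * b⁻¹ := by
    have h' : (a * e)⁻¹ = (b * e)⁻¹ := by rw [hab]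
    rwa [InverseMonoid.mul_inv_rev, InverseMonoid.mul_inv_rev, idem_inv he] at h'
  have key1 : (a * e * a⁻¹) * (a * e * a⁻¹) = a * e * a⁻¹ := by
    calc (a * e * a⁻¹) * (a * e * a⁻¹) = a * e * (a⁻¹ * (a * e * a⁻¹)) := mul_assoc _ _ _
    _ = a * e * (e * a⁻¹) := by rw [inner_lemma he a]
    _ = a * e * e * a⁻¹ := (mul_assoc _ _ _).symm
    _ = a * (e * e) * a⁻¹ := by rw [mul_assoc a e e]
    _ = a * e * a⁻¹ := by rw [he]
  have key3 : a * e * a⁻¹ = b * e * b⁻¹ := by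
    calc a * e * a⁻¹ = a * (e * e) * a⁻¹ := by rw [he]
    _ = a * e * e * a⁻¹ := by rw [← mul_assoc a e e]
    _ = a * e * (e * a⁻¹) := mul_assoc _ _ _
    _ = a * e * (e * b⁻¹) := by rw [key5]
    _ = b * e * (e * b⁻¹) := by rw [hab]
    _ = b * e * e * b⁻¹ := (mul_assoc _ _ _).symm
    _ = b * (e * e) * b⁻¹ := by rw [mul_assoc b e e]
    _ = b * e * b⁻¹ := by rw [he]
  refine ⟨a * e * a⁻¹, key1, ?_⟩
  rw [inner_lemma he a, key5, key3, inner_lemma he b]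

lemma sigma_mul_right {a b : S} (c : S) (h : sigma a b) : sigma (a * c) (b * c) := by
  have h1 := sigma_mul_left c⁻¹ (sigma_inv h)
  have h2 := sigma_inv h1
  rwa [InverseMonoid.mul_inv_rev c⁻¹ a⁻¹, InverseMonoid.mul_inv_rev c⁻¹ b⁻¹,
    InverseMonoid.inv_inv, InverseMonoid.inv_inv, InverseMonoid.inv_inv] at h2

instance sigmaSetoid (S : Type u) [InverseMonoid S] : Setoid S where
  r := sigma
  iseqv := ⟨sigma_refl, sigma_symm, sigma_trans⟩

/-- The maximum group quotient `S/σ`. -/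
def GQuot (S : Type u) [InverseMonoid S] : Type u := Quotient (sigmaSetoid S)

/-- The σ-class of an element, as an element of the maximum group quotient. -/
def σclass {S : Type u} [InverseMonoid S] (a : S) : GQuot S := Quotient.mk (sigmaSetoid S) a

instance (S : Type u) [InverseMonoid S] : Group (GQuot S) where
  mul := Quotient.map₂ (· * ·) (fun _ _ h₁ _ _ h₂ =>
    sigma_trans (sigma_mul_right _ h₁) (sigma_mul_left _ h₂))
  one := σclass 1
  inv := Quotient.map (·⁻¹) (fun _ _ h => sigma_inv h)
  mul_assoc := by
    intro a b c
    induction a using Quotient.ind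
    induction b using Quotient.ind
    induction c using Quotient.ind
    exact congrArg (Quotient.mk _) (mul_assoc _ _ _)
  one_mul := by
    intro a
    induction a using Quotient.ind
    exact congrArg (Quotient.mk _) (one_mul _)
  mul_one := by
    intro a
    induction a using Quotient.ind
    exact congrArg (Quotient.mk _) (mul_one _)
  inv_mul_cancel := by
    intro a
    induction a using Quotient.ind with
    | _ a =>
      refine Quotient.sound ⟨a⁻¹ * a, inv_mul_idem a, ?_⟩
      rw [one_mul]
      exact inv_mul_idem a

end InverseMonoidLemmas


section Graphs

variable {G : Type u} [Group G] {X : Type v}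

/-- A subgraph of the Cayley graph `Cay(G)` of the `X`-generated group `G` (with assignment
mapping `φ : X → G`), represented by its set of vertices and its set of positive edges:
the positive edge `(g, x)` goes from `g` to `g * φ x` and carries the label `x`; every
subgraph closed under edge inversion is uniquely determined by this data. -/
structure Subgraph (φ : X → G) : Type (max u v) where
  verts : Set G
  edges : Set (G × X)
  src_mem : ∀ e ∈ edges, Prod.fst e ∈ verts
  tgt_mem : ∀ e ∈ edges, e.1 * φ e.2 ∈ verts

namespace Subgraph

variable {φ : X → G}

lemma ext' {Γ Δ : Subgraph φ} (hv : Γ.verts = Δ.verts) (he : Γ.edges = Δ.edges) : Γ = Δ := by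
  cases Γ; cases Δ; cases hv; cases he; rfl

/-- Union of subgraphs. -/
def union (Γ Δ : Subgraph φ) : Subgraph φ where
  verts := Γ.verts ∪ Δ.verts
  edges := Γ.edges ∪ Δ.edges
  src_mem := by
    intro e he
    rcases he with h | h
    · exact Set.mem_union_left _ (Γ.src_mem e h)
    · exact Set.mem_union_right _ (Δ.src_mem e h)
  tgt_mem := by
    intro e he
    rcases he with h | h
    · exact Set.mem_union_left _ (Γ.tgt_mem e h)
    · exact Set.mem_union_right _ (Δ.tgt_mem e h)

instance : Union (Subgraph φ) := ⟨union⟩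

@[simp] lemma union_verts (Γ Δ : Subgraph φ) : (Γ ∪ Δ).verts = Γ.verts ∪ Δ.verts := rfl
@[simp] lemma union_edges (Γ Δ : Subgraph φ) : (Γ ∪ Δ).edges = Γ.edges ∪ Δ.edges := rfl

/-- Left translation of a subgraph by a group element. -/
def smul (g : G) (Γ : Subgraph φ) : Subgraph φ where
  verts := (g * ·) '' Γ.verts
  edges := (fun e => (g * e.1, e.2)) '' Γ.edges
  src_mem := by
    rintro e ⟨e', he', rfl⟩
    exact ⟨e'.1, Γ.src_mem e' he', rfl⟩
  tgt_mem := by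
    rintro e ⟨e', he', rfl⟩
    exact ⟨e'.1 * φ e'.2, Γ.tgt_mem e' he', (mul_assoc g e'.1 (φ e'.2)).symm⟩

instance : SMul G (Subgraph φ) := ⟨smul⟩

@[simp] lemma smul_verts (g : G) (Γ : Subgraph φ) : (g • Γ).verts = (g * ·) '' Γ.verts := rfl
@[simp] lemma smul_edges (g : G) (Γ : Subgraph φ) :
    (g • Γ).edges = (fun e : G × X => (g * e.1, e.2)) '' Γ.edges := rfl

/-- The subgraph relation. -/
instance : HasSubset (Subgraph φ) := ⟨fun Γ Δ => Γ.verts ⊆ Δ.verts ∧ Γ.edges ⊆ Δ.edges⟩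

lemma subset_iff (Γ Δ : Subgraph φ) : Γ ⊆ Δ ↔ Γ.verts ⊆ Δ.verts ∧ Γ.edges ⊆ Δ.edges := Iff.rfl

/-- Finiteness of a subgraph. -/
def IsFinite (Γ : Subgraph φ) : Prop := Γ.verts.Finite ∧ Γ.edges.Finite

/-- A subgraph has no isolated vertices if each of its vertices is an endpoint of one
of its edges. -/
def NoIsolated (Γ : Subgraph φ) : Prop :=
  ∀ v ∈ Γ.verts, ∃ e ∈ Γ.edges, v = e.1 ∨ v = e.1 * φ e.2

/-- `Ed(Γ)`: the subgraph spanned by the edges of `Γ`, i.e. `Γ` with all isolated vertices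
removed. -/
def ed (Γ : Subgraph φ) : Subgraph φ where
  verts := {v | ∃ e ∈ Γ.edges, v = e.1 ∨ v = e.1 * φ e.2}
  edges := Γ.edges
  src_mem := fun e he => ⟨e, he, Or.inl rfl⟩
  tgt_mem := fun e he => ⟨e, he, Or.inr rfl⟩

lemma ed_finite {Γ : Subgraph φ} (h : Γ.IsFinite) : Γ.ed.IsFinite := by
  constructor
  · have hsub : Γ.ed.verts ⊆
        (fun e : G × X => e.1) '' Γ.edges ∪ (fun e : G × X => e.1 * φ e.2) '' Γ.edges := by
      rintro v ⟨e, he, rfl | rfl⟩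
      · exact Set.mem_union_left _ ⟨e, he, rfl⟩
      · exact Set.mem_union_right _ ⟨e, he, rfl⟩
    exact ((h.2.image _).union (h.2.image _)).subset hsub
  · exact h.2

lemma ed_noIsolated (Γ : Subgraph φ) : Γ.ed.NoIsolated := fun _ hv => hv

end Subgraph

open Subgraph

variable {φ : X → G}

/-- The subgraph with the single vertex `g` and no edges. -/
def vertexG (φ : X → G) (g : G) : Subgraph φ :=
  ⟨{g}, ∅, by simp, by simp⟩

/-- `Δ_g`: the edgeless subgraph with vertices `1` and `g`. -/
def deltaG (φ : X → G) (g : G) : Subgraph φ :=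
  ⟨{1, g}, ∅, by simp, by simp⟩

/-- The subgraph spanned by a single (positive) edge. -/
def edgeG (φ : X → G) (e : G × X) : Subgraph φ where
  verts := {e.1, e.1 * φ e.2}
  edges := {e}
  src_mem := by
    intro e' he'
    rw [Set.mem_singleton_iff] at he'
    subst he'
    exact Set.mem_insert _ _
  tgt_mem := by
    intro e' he'
    rw [Set.mem_singleton_iff] at he'
    subst he'
    exact Set.mem_insert_of_mem _ rfl

/-- The empty subgraph. -/
def emptyG (φ : X → G) : Subgraph φ := ⟨∅, ∅, by simp, by simp⟩

lemma edgeG_noIsolated (φ : X → G) (e : G × X) : (edgeG φ e).NoIsolated := by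
  intro v hv
  refine ⟨e, Set.mem_singleton e, ?_⟩
  simpa [edgeG] using hv

/-- Two vertices are adjacent in `Γ` if they are connected by an edge of `Γ`. -/
def adj (Γ : Subgraph φ) (u v : G) : Prop :=
  ∃ e ∈ Γ.edges, (u = e.1 ∧ v = e.1 * φ e.2) ∨ (v = e.1 ∧ u = e.1 * φ e.2)

/-- A subgraph is connected if any two of its vertices are joined by a path running in it. -/
def Connected (Γ : Subgraph φ) : Prop :=
  ∀ u ∈ Γ.verts, ∀ v ∈ Γ.verts, Relation.ReflTransGen (adj Γ) u v

lemma adj_mono {Γ Δ : Subgraph φ} (h : Γ.edges ⊆ Δ.edges) {u v : G} (ha : adj Γ u v) :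
    adj Δ u v := by
  obtain ⟨e, he, hc⟩ := ha
  exact ⟨e, h he, hc⟩

lemma Connected.union {Γ Δ : Subgraph φ} (hΓ : Connected Γ) (hΔ : Connected Δ) (w : G)
    (hw₁ : w ∈ Γ.verts) (hw₂ : w ∈ Δ.verts) : Connected (Γ ∪ Δ) := by
  have hsΓ : Γ.edges ⊆ (Γ ∪ Δ).edges := by
    rw [union_edges]; exact Set.subset_union_left
  have hsΔ : Δ.edges ⊆ (Γ ∪ Δ).edges := by
    rw [union_edges]; exact Set.subset_union_right
  have mΓ : ∀ {p q : G}, Relation.ReflTransGen (adj Γ) p q →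
      Relation.ReflTransGen (adj (Γ ∪ Δ)) p q :=
    fun h => Relation.ReflTransGen.mono (fun _ _ h' => adj_mono hsΓ h') _ _ h
  have mΔ : ∀ {p q : G}, Relation.ReflTransGen (adj Δ) p q →
      Relation.ReflTransGen (adj (Γ ∪ Δ)) p q :=
    fun h => Relation.ReflTransGen.mono (fun _ _ h' => adj_mono hsΔ h') _ _ h
  intro u hu v hv
  rw [union_verts] at hu hv
  rcases hu with hu | hu <;> rcases hv with hv | hv
  · exact mΓ (hΓ u hu v hv)
  · exact (mΓ (hΓ u hu w hw₁)).trans (mΔ (hΔ w hw₂ v hv))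
  · exact (mΔ (hΔ u hu w hw₂)).trans (mΓ (hΓ w hw₁ v hv))
  · exact mΔ (hΔ u hu v hv)

lemma Connected.smul {Γ : Subgraph φ} (g : G) (h : Connected Γ) : Connected (g • Γ) := by
  intro u hu v hv
  rw [smul_verts] at hu hv
  obtain ⟨u', hu', rfl⟩ := hu
  obtain ⟨v', hv', rfl⟩ := hv
  refine Relation.ReflTransGen.lift (fun z => g * z) ?_ _ _ (h u' hu' v' hv')
  rintro p q ⟨e, he, hc⟩
  refine ⟨(g * e.1, e.2), ?_, ?_⟩
  · rw [smul_edges]; exact ⟨e, he, rfl⟩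
  · rcases hc with ⟨rfl, rfl⟩ | ⟨rfl, rfl⟩
    · exact Or.inl ⟨rfl, (mul_assoc _ _ _).symm⟩
    · exact Or.inr ⟨rfl, (mul_assoc _ _ _).symm⟩

lemma Subgraph.NoIsolated.union {Γ Δ : Subgraph φ} (hΓ : Γ.NoIsolated) (hΔ : Δ.NoIsolated) :
    (Γ ∪ Δ).NoIsolated := by
  intro v hv
  rw [union_verts] at hv
  rcases hv with hv | hv
  · obtain ⟨e, he, hor⟩ := hΓ v hv
    exact ⟨e, by rw [union_edges]; exact Set.mem_union_left _ he, hor⟩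
  · obtain ⟨e, he, hor⟩ := hΔ v hv
    exact ⟨e, by rw [union_edges]; exact Set.mem_union_right _ he, hor⟩

lemma Subgraph.NoIsolated.smul {Γ : Subgraph φ} (g : G) (h : Γ.NoIsolated) :
    (g • Γ).NoIsolated := by
  intro v hv
  rw [smul_verts] at hv
  obtain ⟨u, hu, rfl⟩ := hv
  obtain ⟨e, he, hor⟩ := h u hu
  refine ⟨(g * e.1, e.2), by rw [smul_edges]; exact ⟨e, he, rfl⟩, ?_⟩
  rcases hor with rfl | rfl
  · exact Or.inl rfl
  · exact Or.inr (mul_assoc _ _ _).symm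

end Graphs


section Expansions

variable {G : Type u} [Group G] {X : Type v} {φ : X → G}

open Subgraph

/-- `F(G)`: pairs `(Γ, g)` where `Γ` is a finite subgraph of `Cay(G)` having `1` and `g`
among its vertices. -/
structure FExp (φ : X → G) : Type (max u v) where
  graph : Subgraph φ
  elt : G
  finite : graph.IsFinite
  one_mem : (1 : G) ∈ graph.verts
  elt_mem : elt ∈ graph.verts

namespace FExp

lemma ext' {a b : FExp φ} (hg : a.graph = b.graph) (he : a.elt = b.elt) : a = b := by
  cases a; cases b; cases hg; cases he; rfl

instance : Mul (FExp φ) :=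
  ⟨fun a b =>
    { graph := a.graph ∪ a.elt • b.graph
      elt := a.elt * b.elt
      finite := ⟨by
          rw [union_verts, smul_verts]
          exact a.finite.1.union (b.finite.1.image _),
        by
          rw [union_edges, smul_edges]
          exact a.finite.2.union (b.finite.2.image _)⟩
      one_mem := by
        rw [union_verts]
        exact Set.mem_union_left _ a.one_mem
      elt_mem := by
        rw [union_verts]
        refine Set.mem_union_right _ ?_
        rw [smul_verts]
        exact ⟨b.elt, b.elt_mem, rfl⟩ }⟩

@[simp] lemma mul_graph (a b : FExp φ) : (a * b).graph = a.graph ∪ a.elt • b.graph := rfl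
@[simp] lemma mul_elt (a b : FExp φ) : (a * b).elt = a.elt * b.elt := rfl

instance : One (FExp φ) :=
  ⟨{ graph := deltaG φ 1
     elt := 1
     finite := ⟨(Set.finite_singleton (1 : G)).insert 1, Set.finite_empty⟩
     one_mem := Set.mem_insert 1 _
     elt_mem := Set.mem_insert 1 _ }⟩

@[simp] lemma one_graph : (1 : FExp φ).graph = deltaG φ 1 := rfl
@[simp] lemma one_elt : (1 : FExp φ).elt = 1 := rfl

instance : Inv (FExp φ) :=
  ⟨fun a =>
    { graph := a.elt⁻¹ • a.graph
      elt := a.elt⁻¹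
      finite := ⟨by rw [smul_verts]; exact a.finite.1.image _,
        by rw [smul_edges]; exact a.finite.2.image _⟩
      one_mem := by
        rw [smul_verts]
        exact ⟨a.elt, a.elt_mem, inv_mul_cancel a.elt⟩
      elt_mem := by
        rw [smul_verts]
        exact ⟨1, a.one_mem, mul_one _⟩ }⟩

@[simp] lemma inv_graph (a : FExp φ) : (a⁻¹).graph = a.elt⁻¹ • a.graph := rfl
@[simp] lemma inv_elt (a : FExp φ) : (a⁻¹).elt = a.elt⁻¹ := rfl

end FExp

/-- The element `(Δ_g, g)` of `F(G)`. -/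
def maxElt (φ : X → G) (g : G) : FExp φ where
  graph := deltaG φ g
  elt := g
  finite := ⟨(Set.finite_singleton g).insert 1, Set.finite_empty⟩
  one_mem := Set.mem_insert 1 _
  elt_mem := Set.mem_insert_of_mem _ rfl

/-- The max-operation `(Γ, g) ↦ (Δ_g, g)` on `F(G)`. -/
def mxOp (a : FExp φ) : FExp φ := maxElt φ a.elt

/-- The generator `(Γ_x, x_G)` of `F(G)`. -/
def genElt (φ : X → G) (x : X) : FExp φ where
  graph := edgeG φ (1, x)
  elt := φ x
  finite := ⟨(Set.finite_singleton _).insert _, Set.finite_singleton _⟩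
  one_mem := Set.mem_insert 1 _
  elt_mem := by simp [edgeG]

/-- `M(G)`: the Margolis–Meakin expansion; pairs `(Γ, g)` where `Γ` is a finite *connected*
subgraph of `Cay(G)` having `1` and `g` among its vertices. -/
structure MExp (φ : X → G) : Type (max u v) where
  graph : Subgraph φ
  elt : G
  finite : graph.IsFinite
  connected : Connected graph
  one_mem : (1 : G) ∈ graph.verts
  elt_mem : elt ∈ graph.verts

namespace MExp

instance : Mul (MExp φ) :=
  ⟨fun a b =>
    { graph := a.graph ∪ a.elt • b.graph
      elt := a.elt * b.elt
      finite := ⟨by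
          rw [union_verts, smul_verts]
          exact a.finite.1.union (b.finite.1.image _),
        by
          rw [union_edges, smul_edges]
          exact a.finite.2.union (b.finite.2.image _)⟩
      connected := by
        refine Connected.union a.connected (Connected.smul a.elt b.connected) a.elt a.elt_mem ?_
        rw [smul_verts]
        exact ⟨1, b.one_mem, mul_one _⟩
      one_mem := by
        rw [union_verts]
        exact Set.mem_union_left _ a.one_mem
      elt_mem := by
        rw [union_verts]
        refine Set.mem_union_right _ ?_
        rw [smul_verts]
        exact ⟨b.elt, b.elt_mem, rfl⟩ }⟩

end MExp

/-- `P(G)`: pairs `(Γ, g)` where `Γ` is a finite subgraph of `Cay(G)` without isolated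
vertices and `g ∈ G` (a model of the semidirect product of the semilattice of such
subgraphs by `G`). -/
structure PExp (φ : X → G) : Type (max u v) where
  graph : Subgraph φ
  elt : G
  finite : graph.IsFinite
  noIsolated : graph.NoIsolated

namespace PExp

lemma ext' {a b : PExp φ} (hg : a.graph = b.graph) (he : a.elt = b.elt) : a = b := by
  cases a; cases b; cases hg; cases he; rfl

instance : Mul (PExp φ) :=
  ⟨fun a b =>
    { graph := a.graph ∪ a.elt • b.graph
      elt := a.elt * b.elt
      finite := ⟨by
          rw [union_verts, smul_verts]
          exact a.finite.1.union (b.finite.1.image _),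
        by
          rw [union_edges, smul_edges]
          exact a.finite.2.union (b.finite.2.image _)⟩
      noIsolated := a.noIsolated.union (b.noIsolated.smul a.elt) }⟩

@[simp] lemma mul_graph (a b : PExp φ) : (a * b).graph = a.graph ∪ a.elt • b.graph := rfl
@[simp] lemma mul_elt (a b : PExp φ) : (a * b).elt = a.elt * b.elt := rfl

instance : One (PExp φ) :=
  ⟨{ graph := emptyG φ
     elt := 1
     finite := ⟨Set.finite_empty, Set.finite_empty⟩
     noIsolated := by intro v hv; simp [emptyG] at hv }⟩

@[simp] lemma one_graph : (1 : PExp φ).graph = emptyG φ := rfl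
@[simp] lemma one_elt : (1 : PExp φ).elt = 1 := rfl

instance : Inv (PExp φ) :=
  ⟨fun a =>
    { graph := a.elt⁻¹ • a.graph
      elt := a.elt⁻¹
      finite := ⟨by rw [smul_verts]; exact a.finite.1.image _,
        by rw [smul_edges]; exact a.finite.2.image _⟩
      noIsolated := a.noIsolated.smul _ }⟩

@[simp] lemma inv_graph (a : PExp φ) : (a⁻¹).graph = a.elt⁻¹ • a.graph := rfl
@[simp] lemma inv_elt (a : PExp φ) : (a⁻¹).elt = a.elt⁻¹ := rfl

end PExp

/-- The max-operation `(Γ, g) ↦ (∅, g)` on `P(G)`. -/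
def pMax (a : PExp φ) : PExp φ where
  graph := emptyG φ
  elt := a.elt
  finite := ⟨Set.finite_empty, Set.finite_empty⟩
  noIsolated := by intro v hv; simp [emptyG] at hv

/-- The generator `(Γ_x, x_G)` of `P(G)`. -/
def genEltP (φ : X → G) (x : X) : PExp φ where
  graph := edgeG φ (1, x)
  elt := φ x
  finite := ⟨(Set.finite_singleton _).insert _, Set.finite_singleton _⟩
  noIsolated := edgeG_noIsolated φ (1, x)

/-- The canonical map `F(G) → P(G)`, `(Γ, g) ↦ (Ed(Γ), g)`. -/
def edMap (a : FExp φ) : PExp φ where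
  graph := a.graph.ed
  elt := a.elt
  finite := ed_finite a.finite
  noIsolated := a.graph.ed_noIsolated

/-- The relation `θ` on `F(G)`: `(Γ,g) θ (Ξ,h)` iff `g = h` and `Ed(Γ) = Ed(Ξ)`. -/
def thetaRel (φ : X → G) (a b : FExp φ) : Prop := a.elt = b.elt ∧ a.graph.ed = b.graph.ed

end Expansions

section Terms

variable {X : Type v}

/-- Terms of the term algebra `I^m_X` in their (unique) normal form
`u₀ · m(v₁) · u₁ ⋯ u_{n-1} · m(vₙ) · uₙ` with `uᵢ, vⱼ` words in the free monoid with
involution `I_X` on `X` (represented as lists over `X ⊕ X`, where `inl x` stands for `x`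
and `inr x` for `x⁻¹`): the first component is `u₀`, and the second lists the pairs
`(vᵢ, uᵢ)`. -/
abbrev MTerm (X : Type v) := List (X ⊕ X) × List (List (X ⊕ X) × List (X ⊕ X))

/-- Value of a letter of `X ⊔ X⁻¹`. -/
def letterVal {M : Type w} [Monoid M] [Inv M] (f : X → M) : X ⊕ X → M
  | Sum.inl x => f x
  | Sum.inr x => (f x)⁻¹

/-- Value of a word of `I_X`. -/
def wordVal {M : Type w} [Monoid M] [Inv M] (f : X → M) (u : List (X ⊕ X)) : M :=
  (u.map (letterVal f)).prod

/-- Value `[t]` of a term `t ∈ I^m_X` under the assignment `f` of the generators,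
where `mop` is interpreted as the operation `m`. -/
def termVal {M : Type w} [Monoid M] [Inv M] (f : X → M) (mop : M → M) (t : MTerm X) : M :=
  wordVal f t.1 * (t.2.map (fun p => mop (wordVal f p.1) * wordVal f p.2)).prod

end Terms

section Journeys

variable {G : Type u} [Group G] {X : Type v}

/-- The subgraph of `Cay(G)` spanned by the path starting at `g` with label the given word;
for the empty word it is the single vertex `g`. -/
def pathGraph (φ : X → G) : G → List (X ⊕ X) → Subgraph φ
  | g, [] => vertexG φ g
  | g, Sum.inl x :: u => edgeG φ (g, x) ∪ pathGraph φ (g * φ x) u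
  | g, Sum.inr x :: u => edgeG φ (g * (φ x)⁻¹, x) ∪ pathGraph φ (g * (φ x)⁻¹) u

/-- The subgraph of `Cay(G)` spanned by the journey `j_g(w)` induced by the term
`w = u₀ · m(v₁) · u₁ ⋯ · m(vₙ) · uₙ` starting at `g`: traverse the path labelled `u₀`
from `g`, jump to `g·[u₀v₁]`, traverse the path labelled `u₁`, and so on. -/
def journeyGraph (φ : X → G) : G → List (X ⊕ X) → List (List (X ⊕ X) × List (X ⊕ X)) →
    Subgraph φ
  | g, u, [] => pathGraph φ g u
  | g, u, (v, u') :: rest =>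
      pathGraph φ g u ∪ journeyGraph φ (g * wordVal φ u * wordVal φ v) u' rest

end Journeys

section AuxStmt8

variable {G : Type u} [Group G] {X : Type v} {φ : X → G}

open Subgraph

lemma one_smul_sub (Γ : Subgraph φ) : (1 : G) • Γ = Γ := by
  apply Subgraph.ext' <;> simp

lemma smul_smul_sub (g h : G) (Γ : Subgraph φ) : g • (h • Γ) = (g * h) • Γ := by
  apply Subgraph.ext'
  · rw [smul_verts, smul_verts, smul_verts, Set.image_image]
    exact Set.image_congr' (fun x => (mul_assoc g h x).symm)
  · rw [smul_edges, smul_edges, smul_edges, Set.image_image]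
    exact Set.image_congr' (fun e => by dsimp only; rw [mul_assoc])

lemma smul_inv_smul_sub (g : G) (Γ : Subgraph φ) : g • (g⁻¹ • Γ) = Γ := by
  rw [smul_smul_sub, mul_inv_cancel, one_smul_sub]

lemma union_self_sub (Γ : Subgraph φ) : Γ ∪ Γ = Γ :=
  Subgraph.ext' (Set.union_self _) (Set.union_self _)

lemma fexp_idem_of_elt_one (e : FExp φ) (h : e.elt = 1) : e * e = e := by
  apply FExp.ext'
  · rw [FExp.mul_graph, h, one_smul_sub, union_self_sub]
  · rw [FExp.mul_elt, h, mul_one]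

lemma fexp_elt_one_of_idem (e : FExp φ) (h : e * e = e) : e.elt = 1 := by
  have := congrArg FExp.elt h
  rw [FExp.mul_elt] at this
  exact mul_eq_right.mp this

lemma fexp_sigma_iff (a b : FExp φ) : sigma a b ↔ a.elt = b.elt := by
  constructor
  · rintro ⟨e, he, hab⟩
    have h1 : e.elt = 1 := fexp_elt_one_of_idem e he
    have := congrArg FExp.elt hab
    rw [FExp.mul_elt, FExp.mul_elt, h1, mul_one, mul_one] at this
    exact this
  · intro h
    refine ⟨⟨(a.elt)⁻¹ • (a.graph ∪ b.graph), 1,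
      ⟨by rw [smul_verts, union_verts]; exact (a.finite.1.union b.finite.1).image _,
       by rw [smul_edges, union_edges]; exact (a.finite.2.union b.finite.2).image _⟩,
      ⟨a.elt, Set.mem_union_left _ a.elt_mem, inv_mul_cancel a.elt⟩,
      ⟨a.elt, Set.mem_union_left _ a.elt_mem, inv_mul_cancel a.elt⟩⟩, ?_, ?_⟩
    · exact fexp_idem_of_elt_one _ rfl
    · apply FExp.ext'
      · show a.graph ∪ a.elt • ((a.elt)⁻¹ • (a.graph ∪ b.graph)) =
          b.graph ∪ b.elt • ((a.elt)⁻¹ • (a.graph ∪ b.graph))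
        rw [smul_inv_smul_sub, ← h, smul_inv_smul_sub]
        apply Subgraph.ext'
        · show a.graph.verts ∪ (a.graph.verts ∪ b.graph.verts) =
            b.graph.verts ∪ (a.graph.verts ∪ b.graph.verts)
          ext v; simp; tauto
        · show a.graph.edges ∪ (a.graph.edges ∪ b.graph.edges) =
            b.graph.edges ∪ (a.graph.edges ∪ b.graph.edges)
          ext v; simp; tauto
      · show a.elt * 1 = b.elt * 1
        rw [h]

lemma fexp_nle_maxElt (g : G) (a : FExp φ) (h : a.elt = g) : nle a (maxElt φ g) := by
  refine ⟨⟨g⁻¹ • a.graph, 1,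
    ⟨by rw [smul_verts]; exact a.finite.1.image _,
     by rw [smul_edges]; exact a.finite.2.image _⟩,
    ⟨g, h ▸ a.elt_mem, inv_mul_cancel g⟩,
    ⟨g, h ▸ a.elt_mem, inv_mul_cancel g⟩⟩, fexp_idem_of_elt_one _ rfl, ?_⟩
  apply FExp.ext'
  · show a.graph = deltaG φ g ∪ g • (g⁻¹ • a.graph)
    rw [smul_inv_smul_sub]
    apply Subgraph.ext'
    · show a.graph.verts = ({1, g} : Set G) ∪ a.graph.verts
      rw [Set.union_eq_self_of_subset_left]
      rw [Set.insert_subset_iff, Set.singleton_subset_iff]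
      exact ⟨a.one_mem, h ▸ a.elt_mem⟩
    · show a.graph.edges = (∅ : Set (G × X)) ∪ a.graph.edges
      rw [Set.empty_union]
  · show a.elt = g * 1
    rw [mul_one, h]

end AuxStmt8

/-- For an `X`-generated group `G`, the projection `F(G) → G, (Γ,g) ↦ g` is a
surjective monoid morphism which is idempotent pure; its kernel congruence is exactly the
minimum group congruence σ of `F(G)` (i.e. `(Γ,g) σ (Ξ,h)` iff `g = h`), so `G` is the
maximum group quotient of `F(G)`.  Moreover each `(Δ_g, g)` is the maximum element of its
σ-class; hence `F(G)` is an F-inverse monoid with max-operation `m(Γ,g) = (Δ_g, g)`. -/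
theorem statement8 {G : Type u} [Group G] {X : Type v} (φ : X → G)
    (hφ : Subgroup.closure (Set.range φ) = ⊤) :
    -- (Γ,g) ↦ g is a monoid morphism
    (∀ a b : FExp φ, (a * b).elt = a.elt * b.elt) ∧
    ((1 : FExp φ).elt = 1) ∧
    -- surjective
    Function.Surjective (fun a : FExp φ => a.elt) ∧
    -- idempotent pure
    (∀ a : FExp φ, a.elt = 1 → a * a = a) ∧
    -- its kernel congruence is exactly σ
    (∀ a b : FExp φ, sigma a b ↔ a.elt = b.elt) ∧
    -- each (Δ_g, g) is the maximum element of its σ-class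
    (∀ g : G, ∀ a : FExp φ, sigma a (maxElt φ g) → nle a (maxElt φ g)) ∧
    -- F(G) is F-inverse with max-operation m(Γ,g) = (Δ_g, g)
    IsMaxOp (fun a : FExp φ => maxElt φ a.elt) := by
  refine ⟨fun a b => rfl, rfl, fun g => ⟨maxElt φ g, rfl⟩,
    fun a h => fexp_idem_of_elt_one a h, fexp_sigma_iff,
    fun g a h => fexp_nle_maxElt g a ((fexp_sigma_iff a (maxElt φ g)).mp h),
    fun a => ⟨(fexp_sigma_iff _ _).mpr rfl, fun b hb =>
      fexp_nle_maxElt a.elt b ((fexp_sigma_iff b a).mp hb)⟩⟩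

end FInvPaper
end

section
/- For an F-inverse monoid S the following are equivalent: (1) S is perfect, i.e., the set product of any two σ-classes is again an entire σ-class; (2) m(a)·m(b) = m(a·b) for all a, b ∈ S; (3) m(a)·m(a⁻¹) = 1 for all a ∈ S. -/
namespace FInvPaper

universe u v w

section AuxOrder

variable {S : Type u} [InverseMonoid S]

lemma nle_antisymm {a b : S} (h1 : nle a b) (h2 : nle b a) : a = b := by
  obtain ⟨e, he, rfl⟩ := h1
  obtain ⟨f, hf, hb⟩ := h2
  -- hb : b = b * e * f
  have hb' : b = b * (e * f) := by rw [← mul_assoc]; exact hb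
  have hefe : e * (f * e) = e * f := by
    rw [InverseMonoid.idem_comm f e hf he, ← mul_assoc, he]
  calc b * e = b * (e * f) * e := by rw [← hb']
  _ = b * (e * f * e) := by rw [mul_assoc]
  _ = b * (e * (f * e)) := by rw [mul_assoc e f e]
  _ = b * (e * f) := by rw [hefe]
  _ = b := hb'.symm

lemma nle_trans {a b c : S} (h1 : nle a b) (h2 : nle b c) : nle a c := by
  obtain ⟨e, he, rfl⟩ := h1
  obtain ⟨f, hf, rfl⟩ := h2
  exact ⟨f * e, idem_mul_idem hf he, mul_assoc _ _ _⟩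

lemma sigma_of_nle {a b : S} (h : nle a b) : sigma a b := by
  obtain ⟨e, he, rfl⟩ := h
  exact ⟨e, he, by rw [mul_assoc, he]⟩

lemma nle_mul_left {a b : S} (c : S) (h : nle a b) : nle (c * a) (c * b) := by
  obtain ⟨e, he, rfl⟩ := h
  exact ⟨e, he, (mul_assoc _ _ _).symm⟩

lemma conj_idem {e : S} (he : e * e = e) (c : S) :
    (c⁻¹ * e * c) * (c⁻¹ * e * c) = c⁻¹ * e * c := by
  have h1 : e * (c * c⁻¹) = (c * c⁻¹) * e :=
    InverseMonoid.idem_comm e (c * c⁻¹) he (mul_inv_idem c)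
  calc (c⁻¹ * e * c) * (c⁻¹ * e * c)
      = c⁻¹ * e * (c * (c⁻¹ * e * c)) := mul_assoc _ _ _
  _ = c⁻¹ * e * (c * (c⁻¹ * (e * c))) := by rw [mul_assoc c⁻¹ e c]
  _ = c⁻¹ * e * (c * c⁻¹ * (e * c)) := by rw [mul_assoc c c⁻¹ (e * c)]
  _ = c⁻¹ * (e * (c * c⁻¹ * (e * c))) := mul_assoc _ _ _
  _ = c⁻¹ * (e * (c * c⁻¹) * (e * c)) := by rw [← mul_assoc e (c * c⁻¹) (e * c)]
  _ = c⁻¹ * ((c * c⁻¹) * e * (e * c)) := by rw [h1]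
  _ = c⁻¹ * ((c * c⁻¹) * (e * (e * c))) := by rw [mul_assoc (c * c⁻¹) e (e * c)]
  _ = c⁻¹ * ((c * c⁻¹) * (e * e * c)) := by rw [mul_assoc e e c]
  _ = c⁻¹ * ((c * c⁻¹) * (e * c)) := by rw [he]
  _ = c⁻¹ * (c * c⁻¹) * (e * c) := (mul_assoc _ _ _).symm
  _ = c⁻¹ * c * c⁻¹ * (e * c) := by rw [← mul_assoc c⁻¹ c c⁻¹]
  _ = c⁻¹ * (e * c) := by rw [inv_mul_self_mul]
  _ = c⁻¹ * e * c := (mul_assoc _ _ _).symm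

lemma nle_mul_right {a b : S} (c : S) (h : nle a b) : nle (a * c) (b * c) := by
  obtain ⟨e, he, rfl⟩ := h
  refine ⟨c⁻¹ * e * c, conj_idem he c, ?_⟩
  have h1 : e * (c * c⁻¹) = (c * c⁻¹) * e :=
    InverseMonoid.idem_comm e (c * c⁻¹) he (mul_inv_idem c)
  calc b * e * c = b * e * (c * c⁻¹ * c) := by rw [InverseMonoid.mul_inv_self_mul]
  _ = b * (e * (c * c⁻¹ * c)) := mul_assoc _ _ _
  _ = b * (e * (c * c⁻¹) * c) := by rw [← mul_assoc e (c * c⁻¹) c]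
  _ = b * ((c * c⁻¹) * e * c) := by rw [h1]
  _ = b * (c * c⁻¹ * (e * c)) := by rw [mul_assoc (c * c⁻¹) e c]
  _ = b * (c * (c⁻¹ * (e * c))) := by rw [mul_assoc c c⁻¹ (e * c)]
  _ = b * (c * (c⁻¹ * e * c)) := by rw [← mul_assoc c⁻¹ e c]
  _ = b * c * (c⁻¹ * e * c) := (mul_assoc _ _ _).symm

lemma one_of_nle_one {a : S} (h : nle 1 a) : a = 1 := by
  obtain ⟨e, he, h1⟩ := h
  -- h1 : 1 = a * e
  have hainv : a⁻¹ * a⁻¹ = a⁻¹ := by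
    have h2 : a⁻¹ = a⁻¹ * a * e := by
      conv_lhs => rw [← mul_one a⁻¹, h1, ← mul_assoc]
    rw [h2]
    exact idem_mul_idem (inv_mul_idem a) he
  have haa : a = a⁻¹ := by
    have := idem_inv hainv
    rw [InverseMonoid.inv_inv] at this
    exact this
  have hidem : a * a = a := by rw [haa]; exact hainv
  calc a = a * 1 := (mul_one a).symm
  _ = a * (a * e) := by rw [← h1]
  _ = a * a * e := (mul_assoc _ _ _).symm
  _ = a * e := by rw [hidem]
  _ = 1 := h1.symm

end AuxOrder

section AuxMx

variable {S : Type u} [FInverseMonoid S]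

lemma mx_sigma (a : S) : sigma (mx a) a := (FInverseMonoid.mx_isMaxOp a).1

lemma nle_mx {a b : S} (h : sigma b a) : nle b (mx a) :=
  (FInverseMonoid.mx_isMaxOp a).2 b h

lemma self_nle_mx (a : S) : nle a (mx a) := nle_mx (sigma_refl a)

lemma mx_eq_of_sigma {a b : S} (h : sigma a b) : mx a = mx b :=
  nle_antisymm (nle_mx (sigma_trans (mx_sigma a) h))
    (nle_mx (sigma_trans (mx_sigma b) (sigma_symm h)))

lemma mx_one : mx (1 : S) = 1 := one_of_nle_one (self_nle_mx 1)

lemma mx_mul_sigma (a b : S) : sigma (mx a * mx b) (a * b) :=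
  sigma_trans (sigma_mul_right (mx b) (mx_sigma a)) (sigma_mul_left a (mx_sigma b))

end AuxMx

open scoped Pointwise in
/-- For an F-inverse monoid `S` the following are equivalent: (1) `S` is
perfect, i.e. the (pointwise) set product of any two σ-classes is again an entire σ-class;
(2) `m a · m b = m (a·b)` for all `a, b`; (3) `m a · m (a⁻¹) = 1` for all `a`. -/
theorem statement15 {S : Type u} [FInverseMonoid S] :
    ((∀ A B : Set S, IsSigmaClass A → IsSigmaClass B → IsSigmaClass (A * B)) ↔
      ∀ a b : S, mx a * mx b = mx (a * b)) ∧
    ((∀ a b : S, mx a * mx b = mx (a * b)) ↔ ∀ a : S, mx a * mx (a⁻¹) = 1) := by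
  constructor
  · constructor
    · -- (1) → (2)
      intro h a b
      obtain ⟨d, hd⟩ := h {c | sigma c a} {c | sigma c b} ⟨a, rfl⟩ ⟨b, rfl⟩
      have hab : a * b ∈ ({c | sigma c a} : Set S) * {c | sigma c b} :=
        Set.mul_mem_mul (sigma_refl a) (sigma_refl b)
      have habd : sigma (a * b) d := by rw [hd] at hab; exact hab
      -- mx a * mx b ≤ mx (a*b)
      have h1 : nle (mx a * mx b) (mx (a * b)) := nle_mx (mx_mul_sigma a b)
      -- mx (a*b) ∈ A * B
      have h2 : mx (a * b) ∈ ({c | sigma c a} : Set S) * {c | sigma c b} := by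
        rw [hd]
        exact sigma_trans (mx_sigma (a * b)) habd
      obtain ⟨x, hx, y, hy, hxy⟩ := Set.mem_mul.mp h2
      have h3 : nle (mx (a * b)) (mx a * mx b) := by
        rw [← hxy]
        exact nle_trans (nle_mul_right y (nle_mx hx)) (nle_mul_left (mx a) (nle_mx hy))
      exact nle_antisymm h1 h3
    · -- (2) → (1)
      intro h A B hA hB
      obtain ⟨a, rfl⟩ := hA
      obtain ⟨b, rfl⟩ := hB
      refine ⟨a * b, Set.Subset.antisymm ?_ ?_⟩
      · rintro c hc
        obtain ⟨x, hx, y, hy, rfl⟩ := Set.mem_mul.mp hc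
        exact sigma_trans (sigma_mul_right y hx) (sigma_mul_left a hy)
      · intro c hc
        have hle : nle c (mx (a * b)) := nle_mx hc
        rw [← h a b] at hle
        obtain ⟨e, he, rfl⟩ := hle
        have : mx a * mx b * e = mx a * (mx b * e) := mul_assoc _ _ _
        rw [this]
        refine Set.mul_mem_mul (mx_sigma a) ?_
        exact sigma_trans (sigma_of_nle ⟨e, he, rfl⟩) (mx_sigma b)
  · constructor
    · -- (2) → (3)
      intro h a
      have hs : sigma (a * a⁻¹) 1 :=
        ⟨a * a⁻¹, mul_inv_idem a, by rw [mul_inv_idem, one_mul]⟩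
      rw [h a a⁻¹, mx_eq_of_sigma hs, mx_one]
    · -- (3) → (2)
      intro h a b
      have h1 : nle (mx a * mx b) (mx (a * b)) := nle_mx (mx_mul_sigma a b)
      -- mx(ab) * mx(b⁻¹) ≤ mx a
      have habb : nle (a * b * b⁻¹) a := ⟨b * b⁻¹, mul_inv_idem b, mul_assoc a b b⁻¹⟩
      have h2 : sigma (mx (a * b) * mx b⁻¹) a :=
        sigma_trans (mx_mul_sigma (a * b) b⁻¹) (sigma_of_nle habb)
      have h3 : nle (mx (a * b) * mx b⁻¹ * mx b) (mx a * mx b) :=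
        nle_mul_right (mx b) (nle_mx h2)
      have h4 : mx (a * b) * mx b⁻¹ * mx b = mx (a * b) := by
        have h5 : mx b⁻¹ * mx b = 1 := by
          have := h b⁻¹
          rwa [InverseMonoid.inv_inv] at this
        rw [mul_assoc, h5, mul_one]
      rw [h4] at h3
      exact nle_antisymm h1 h3

end FInvPaper
end

section
/- Let G be an X-generated group. Define a relation θ on F(G) by: (Γ,g) θ (Ξ,h) if and only if g = h and Ed(Γ) = Ed(Ξ). Then θ is a congruence on F(G) compatible with ·, ⁻¹ and the max-operation m, the quotient F(G)/θ is a perfect F-inverse monoid, and θ is contained in every congruence ρ on F(G) (compatible with ·, ⁻¹ and m) for which F(G)/ρ is perfect; that is, θ is the smallest congruence on F(G) with perfect quotient. -/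
namespace FInvPaper

universe u v w

section Proof16

variable {G : Type u} [Group G] {X : Type v} {φ : X → G}

open Subgraph

lemma ed_congr {Γ Δ : Subgraph φ} (h : Γ.edges = Δ.edges) : Γ.ed = Δ.ed := by
  refine Subgraph.ext' ?_ h
  show {v | ∃ e ∈ Γ.edges, v = e.1 ∨ v = e.1 * φ e.2}
     = {v | ∃ e ∈ Δ.edges, v = e.1 ∨ v = e.1 * φ e.2}
  rw [h]

/-- The edgeless element with vertex set `{1} ∪ s` and group component `1`. -/
def vE (φ : X → G) (s : Finset G) : FExp φ where
  graph := ⟨insert 1 ↑s, ∅, by simp, by simp⟩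
  elt := 1
  finite := ⟨s.finite_toSet.insert 1, Set.finite_empty⟩
  one_mem := Set.mem_insert _ _
  elt_mem := Set.mem_insert _ _

lemma one_mul_fexp (a : FExp φ) : (1 : FExp φ) * a = a := by
  refine FExp.ext' (Subgraph.ext' ?_ ?_) (one_mul _)
  · ext x
    simp only [FExp.mul_graph, FExp.one_graph, FExp.one_elt, union_verts, smul_verts, deltaG,
      Set.mem_union, Set.mem_insert_iff, Set.mem_singleton_iff, Set.mem_image, one_mul,
      exists_eq_right]
    constructor
    · rintro ((rfl | rfl) | h) <;> first | exact a.one_mem | exact h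
    · exact Or.inr
  · ext e
    simp only [FExp.mul_graph, FExp.one_graph, FExp.one_elt, union_edges, smul_edges, deltaG,
      Set.mem_union, Set.mem_empty_iff_false, false_or, Set.mem_image, one_mul, Prod.mk.eta]
    constructor
    · rintro ⟨e', he', rfl⟩; exact he'
    · intro he; exact ⟨e, he, rfl⟩

lemma rho_vE {ρ : FExp φ → FExp φ → Prop} (heq : Equivalence ρ)
    (hmul : ∀ a b c d : FExp φ, ρ a b → ρ c d → ρ (a * c) (b * d))
    (hperf : ∀ a : FExp φ, ρ (mxOp a * mxOp a⁻¹) 1)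
    (s : Finset G) : ρ (vE φ s) 1 := by
  classical
  induction s using Finset.induction_on with
  | empty =>
      have h : vE φ (∅ : Finset G) = 1 := by
        refine FExp.ext' (Subgraph.ext' ?_ rfl) rfl
        ext x; simp [vE, deltaG]
      rw [h]; exact heq.refl 1
  | @insert v s hv ih =>
      have h1 : ρ (maxElt φ v * maxElt φ v⁻¹) 1 := hperf (maxElt φ v)
      have h2 : ρ ((maxElt φ v * maxElt φ v⁻¹) * vE φ s) ((1 : FExp φ) * 1) :=
        hmul _ _ _ _ h1 ih
      have e2 : (1 : FExp φ) * 1 = 1 := one_mul_fexp 1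
      have e1 : (maxElt φ v * maxElt φ v⁻¹) * vE φ s = vE φ (insert v s) := by
        refine FExp.ext' (Subgraph.ext' ?_ ?_) ?_
        · ext x
          simp only [FExp.mul_graph, union_verts, smul_verts, maxElt, deltaG, vE,
            Set.mem_union, Set.mem_insert_iff, Set.mem_singleton_iff, Set.mem_image,
            Finset.coe_insert, mul_inv_cancel, one_mul]
          constructor
          · aesop
          · aesop
        · ext e
          simp [FExp.mul_graph, union_edges, smul_edges, maxElt, deltaG, vE]
        · simp [maxElt, vE]
      rw [e1, e2] at h2
      exact h2

end Proof16

/-- The relation `θ` on `F(G)` given by `(Γ,g) θ (Ξ,h)` iff `g = h` and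
`Ed(Γ) = Ed(Ξ)` is a congruence compatible with `·`, `⁻¹` and the max-operation `m`; the
quotient `F(G)/θ` is a perfect F-inverse monoid (equivalently, it satisfies the law
`m x · m (x⁻¹) = 1`, i.e. `θ (m a · m (a⁻¹)) 1` holds for all `a`); and `θ` is contained in
every congruence `ρ` on `F(G)` whose quotient is perfect.  Thus `θ` is the smallest
congruence on `F(G)` with perfect quotient. -/
theorem statement16 {G : Type u} [Group G] {X : Type v} (φ : X → G)
    (hφ : Subgroup.closure (Set.range φ) = ⊤) :
    Equivalence (thetaRel φ) ∧
    (∀ a b c d : FExp φ, thetaRel φ a b → thetaRel φ c d → thetaRel φ (a * c) (b * d)) ∧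
    (∀ a b : FExp φ, thetaRel φ a b → thetaRel φ a⁻¹ b⁻¹) ∧
    (∀ a b : FExp φ, thetaRel φ a b → thetaRel φ (mxOp a) (mxOp b)) ∧
    -- the quotient F(G)/θ is perfect
    (∀ a : FExp φ, thetaRel φ (mxOp a * mxOp a⁻¹) 1) ∧
    -- θ is contained in every congruence ρ with perfect quotient
    (∀ ρ : FExp φ → FExp φ → Prop, Equivalence ρ →
      (∀ a b c d : FExp φ, ρ a b → ρ c d → ρ (a * c) (b * d)) →
      (∀ a b : FExp φ, ρ a b → ρ a⁻¹ b⁻¹) →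
      (∀ a b : FExp φ, ρ a b → ρ (mxOp a) (mxOp b)) →
      (∀ a : FExp φ, ρ (mxOp a * mxOp a⁻¹) 1) →
      ∀ a b : FExp φ, thetaRel φ a b → ρ a b) := by
  classical
  refine ⟨⟨fun a => ⟨rfl, rfl⟩, fun h => ⟨h.1.symm, h.2.symm⟩,
    fun h1 h2 => ⟨h1.1.trans h2.1, h1.2.trans h2.2⟩⟩, ?_, ?_, ?_, ?_, ?_⟩
  · -- multiplication
    rintro a b c d ⟨he1, hg1⟩ ⟨he2, hg2⟩
    have hE1 : a.graph.edges = b.graph.edges := by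
      have h := congrArg Subgraph.edges hg1; exact h
    have hE2 : c.graph.edges = d.graph.edges := by
      have h := congrArg Subgraph.edges hg2; exact h
    refine ⟨by simp [he1, he2], ed_congr ?_⟩
    simp only [FExp.mul_graph, Subgraph.union_edges, Subgraph.smul_edges, he1, hE1, hE2]
  · -- inversion
    rintro a b ⟨he, hg⟩
    have hE : a.graph.edges = b.graph.edges := by
      have h := congrArg Subgraph.edges hg; exact h
    refine ⟨by simp [he], ed_congr ?_⟩
    simp only [FExp.inv_graph, Subgraph.smul_edges, he, hE]
  · -- max operation
    rintro a b ⟨he, _⟩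
    exact ⟨by simp [mxOp, maxElt, he], ed_congr rfl⟩
  · -- perfectness
    intro a
    refine ⟨by simp [mxOp, maxElt], ed_congr ?_⟩
    ext e
    simp [mxOp, maxElt, deltaG]
  · -- minimality
    rintro ρ heq hmul hinv hmx hperf a b ⟨helt, hed⟩
    have hedge : a.graph.edges = b.graph.edges := by
      have h := congrArg Subgraph.edges hed; exact h
    have h1 : ρ (vE φ b.finite.1.toFinset * a) ((1 : FExp φ) * a) :=
      hmul _ _ _ _ (rho_vE heq hmul hperf _) (heq.refl a)
    have h2 : ρ (vE φ a.finite.1.toFinset * b) ((1 : FExp φ) * b) :=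
      hmul _ _ _ _ (rho_vE heq hmul hperf _) (heq.refl b)
    rw [one_mul_fexp a] at h1
    rw [one_mul_fexp b] at h2
    have key : vE φ b.finite.1.toFinset * a = vE φ a.finite.1.toFinset * b := by
      refine FExp.ext' (Subgraph.ext' ?_ ?_) ?_
      · ext x
        simp only [FExp.mul_graph, Subgraph.union_verts, Subgraph.smul_verts, vE,
          Set.mem_union, Set.mem_insert_iff, Set.mem_image, Finset.mem_coe,
          Set.Finite.mem_toFinset, one_mul, exists_eq_right]
        tauto
      · ext e
        simp only [FExp.mul_graph, Subgraph.union_edges, Subgraph.smul_edges, vE,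
          Set.mem_union, Set.mem_empty_iff_false, false_or, hedge]
      · simp [vE, helt]
    rw [key] at h1
    exact heq.trans (heq.symm h1) h2

end FInvPaper
end
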